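/- Let μ₁ be the measure on ℝ with density the indicator of [0,1], let μ₂ be the measure on ℝ with density 3·(indicator of (0,1/3)), and let μ₃ be the measure on ℝ with density 3·(indicator of (2/3,1)), each with respect to Lebesgue measure. Then there do not exist cutpoints a, b with 0 ≤ a ≤ b ≤ 1 such that μ₁([0,a]) = μ₃([a,b]) = μ₂([b,1]) and this common value is positive. -/

import Mathlib

open MeasureTheory Set

/-- Player 1 values the unit interval uniformly. -/
noncomputable def mu1 : Measure ℝ :=
  volume.withDensity ((Icc (0:ℝ) 1).indicator fun _ => (1 : ENNReal))

/-- Player 2's value is uniform on `(0, 1/3)`. -/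
noncomputable def mu2 : Measure ℝ :=
  volume.withDensity ((Ioo (0:ℝ) (1/3)).indicator fun _ => (3 : ENNReal))

/-- Player 3's value is uniform on `(2/3, 1)`. -/
noncomputable def mu3 : Measure ℝ :=
  volume.withDensity ((Ioo (2/3:ℝ) 1).indicator fun _ => (3 : ENNReal))

lemma mu2_zero {b : ℝ} (hb : 1/3 ≤ b) : mu2 (Icc b 1) = 0 := by
  rw [mu2, withDensity_apply _ measurableSet_Icc]
  rw [setLIntegral_congr_fun_ae measurableSet_Icc
    (ae_of_all _ (fun x hx => indicator_of_notMem (fun hm => absurd hm.2 (not_lt.2 (hb.trans hx.1))) _))]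
  simp

lemma mu3_zero {a b : ℝ} (hb : b < 2/3) : mu3 (Icc a b) = 0 := by
  rw [mu3, withDensity_apply _ measurableSet_Icc]
  rw [setLIntegral_congr_fun_ae measurableSet_Icc
    (ae_of_all _ (fun x hx => indicator_of_notMem (fun hm => absurd hm.1 (not_lt.2 (hx.2.trans hb.le))) _))]
  simp

/-- For the left-to-right ordering 1–3–2 there are no cutpoints `a ≤ b` equalizing the
three players' values at a positive common value. -/
theorem no_equalizing_cutpoints :
    ¬ ∃ a b : ℝ, 0 ≤ a ∧ a ≤ b ∧ b ≤ 1 ∧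
      mu1 (Icc (0:ℝ) a) = mu3 (Icc a b) ∧
      mu3 (Icc a b) = mu2 (Icc b 1) ∧
      0 < mu1 (Icc (0:ℝ) a) := by
  rintro ⟨a, b, ha, hab, hb1, h13, h32, hpos⟩
  by_cases hb : 1/3 ≤ b
  · rw [h13, h32, mu2_zero hb] at hpos
    exact lt_irrefl _ hpos
  · rw [h13, mu3_zero (lt_of_not_ge hb |>.trans (by norm_num))] at hpos
    exact lt_irrefl _ hpos
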